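/- Let g be a perfect Lie algebra with zero center, and let D be a derivation of Der(g). Then the map d : g → g defined uniquely by D(ad_x) = ad_{d(x)} is itself a derivation of g. -/

import Mathlib

/-- Let `g` be perfect with zero center and `D` a derivation of `Der(g)`. The map
`d : g → g` determined by `D (ad x) = ad (d x)` is itself a derivation of `g`. -/
theorem induced_map_is_derivation (K : Type*) (L : Type*) [Field K] [LieRing L]
    [LieAlgebra K L] (hperf : ⁅(⊤ : LieIdeal K L), (⊤ : LieIdeal K L)⁆ = ⊤)
    (hc : LieAlgebra.center K L = ⊥)
    (D : LieDerivation K (LieDerivation K L L) (LieDerivation K L L))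
    (d : L → L) (hd : ∀ x : L, D (LieDerivation.ad K L x) = LieDerivation.ad K L (d x)) :
    ∃ e : LieDerivation K L L, ⇑e = d := by
  have hinj := LieDerivation.injective_ad_of_center_eq_bot (R := K) (L := L) hc
  refine ⟨⟨{ toFun := d, map_add' := ?_, map_smul' := ?_ }, ?_⟩, rfl⟩
  · intro x y
    apply hinj
    rw [← hd, map_add (LieDerivation.ad K L), map_add, hd, hd, ← map_add (LieDerivation.ad K L)]
  · intro c x
    apply hinj
    simp only [RingHom.id_apply]
    rw [← hd, map_smul (LieDerivation.ad K L), map_smul, hd, ← map_smul (LieDerivation.ad K L)]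
  · intro a b
    apply hinj
    simp only [LinearMap.coe_mk, AddHom.coe_mk]
    rw [← hd, LieHom.map_lie, D.apply_lie_eq_add, hd, hd, ← LieHom.map_lie,
      ← LieHom.map_lie, ← map_add (LieDerivation.ad K L), ← lie_skew b (d a)]
    simp [sub_eq_add_neg]
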